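/- Let γ > 1, ε > 0, let u₀ ∈ ℝ^d, B₀ ∈ ℝ^d, p₀ ∈ ℝ be constants, and let ρ : ℝ^d × (0,∞) → ℝ be positive, twice continuously differentiable in space and continuously differentiable in time, satisfying ∂_t ρ + ∇·(ρ u₀) = εΔρ. Define m := ρ u₀, E := p₀/(γ−1) + ρ|u₀|²/2 + |B₀|²/2, B := B₀, p := p₀, u := u₀, and 𝒯 := B₀ ⊗ B₀ − (|B₀|²/2)I. Then (ρ, m, E, B) solves the full monolithic-regularized ideal MHD system: ∂_t m + ∇·(m ⊗ u + p I) − ∇·𝒯 = εΔm, ∂_t E + ∇·(u(E+p)) − ∇·(u·𝒯) = εΔE, and ∂_t B + ∇·(u ⊗ B − B ⊗ u) = εΔB hold at every point. In particular, the monolithic parabolic flux is compatible with contact waves. -/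

import Mathlib

open scoped BigOperators

/-- Spatial partial derivative `∂_i f (x)` of a scalar field on `ℝ^d`. -/
noncomputable def spd {d : ℕ} (f : (Fin d → ℝ) → ℝ) (i : Fin d) (x : Fin d → ℝ) : ℝ :=
  fderiv ℝ f x (Pi.single i 1)

/-- Laplacian `Δf(x) = ∑ᵢ ∂ᵢ∂ᵢ f (x)` of a scalar field on `ℝ^d`. -/
noncomputable def slap {d : ℕ} (f : (Fin d → ℝ) → ℝ) (x : Fin d → ℝ) : ℝ :=
  ∑ i, spd (spd f i) i x

/-- The Maxwell stress tensor `𝒯 = B ⊗ B − (|B|²/2) I` built from a vector `B ∈ ℝ^d`. -/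
noncomputable def maxwellT {d : ℕ} (B : Fin d → ℝ) (i j : Fin d) : ℝ :=
  B i * B j - (if i = j then (∑ k, (B k) ^ 2) / 2 else 0)

lemma spd_affine {d : ℕ} {f : (Fin d → ℝ) → ℝ} (hf : Differentiable ℝ f)
    (c c' : ℝ) (i : Fin d) (x : Fin d → ℝ) :
    spd (fun y => c * f y + c') i x = c * spd f i x := by
  unfold spd
  have h1 : fderiv ℝ (fun y => c * f y + c') x = fderiv ℝ (fun y => c * f y) x :=
    fderiv_add_const c'
  have h2 : fderiv ℝ (fun y => c * f y) x = c • fderiv ℝ f x :=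
    fderiv_const_mul (hf x) c
  rw [h1, h2]; simp

lemma spd_contDiff {d : ℕ} {f : (Fin d → ℝ) → ℝ} (hf : ContDiff ℝ 2 f) (i : Fin d) :
    ContDiff ℝ 1 (fun x => spd f i x) := by
  have h : ContDiff ℝ 1 (fun x => fderiv ℝ f x) := hf.fderiv_right (by norm_num)
  exact h.clm_apply contDiff_const

lemma slap_affine {d : ℕ} {f : (Fin d → ℝ) → ℝ} (hf : ContDiff ℝ 2 f)
    (c c' : ℝ) (x : Fin d → ℝ) :
    slap (fun y => c * f y + c') x = c * slap f x := by
  unfold slap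
  rw [Finset.mul_sum]
  refine Finset.sum_congr rfl fun i _ => ?_
  have h1 : spd (fun y => c * f y + c') i = fun z => c * spd f i z + 0 := by
    funext z
    rw [spd_affine (hf.differentiable (by norm_num)) c c' i z]; ring
  rw [h1, spd_affine ((spd_contDiff hf i).differentiable one_ne_zero) c 0]

lemma spd_const {d : ℕ} (c : ℝ) (i : Fin d) (x : Fin d → ℝ) :
    spd (fun _ => c) i x = 0 := by
  simp [spd]

/-- contact waves are compatible with the monolithic parabolic flux.
If `ρ` solves the regularized mass equation `∂ₜρ + ∇·(ρu₀) = εΔρ` with constant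
`u₀, B₀, p₀`, then with `m := ρu₀`, `E := p₀/(γ−1) + ρ|u₀|²/2 + |B₀|²/2`, `B := B₀`,
and `𝒯 := B₀ ⊗ B₀ − (|B₀|²/2)I`, the momentum, energy, and induction equations of the
monolithic-regularized ideal MHD system hold at every point. -/
theorem stmt_16 {d : ℕ} (hd : 1 ≤ d) (γ ε : ℝ) (hγ : 1 < γ) (hε : 0 < ε)
    (u₀ B₀ : Fin d → ℝ) (p₀ : ℝ)
    (ρ : (Fin d → ℝ) → ℝ → ℝ)
    (hρpos : ∀ x t, 0 < ρ x t)
    (hρx : ∀ t, ContDiff ℝ 2 fun x => ρ x t) (hρt : ∀ x, ContDiff ℝ 1 fun t => ρ x t)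
    (hmass : ∀ (x : Fin d → ℝ) (t : ℝ), 0 < t →
      deriv (fun τ => ρ x τ) t + (∑ j, spd (fun y => ρ y t * u₀ j) j x)
        = ε * slap (fun y => ρ y t) x) :
    -- momentum equation
    (∀ (x : Fin d → ℝ) (t : ℝ), 0 < t → ∀ i,
      deriv (fun τ => ρ x τ * u₀ i) t
        + (∑ j, spd (fun y => (ρ y t * u₀ i) * u₀ j
            + (if i = j then p₀ else 0) - maxwellT B₀ i j) j x)
        = ε * slap (fun y => ρ y t * u₀ i) x)
    -- energy equation
    ∧ (∀ (x : Fin d → ℝ) (t : ℝ), 0 < t →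
      deriv (fun τ => p₀ / (γ - 1) + ρ x τ * (∑ k, (u₀ k) ^ 2) / 2
          + (∑ k, (B₀ k) ^ 2) / 2) t
        + (∑ j, spd (fun y => u₀ j * ((p₀ / (γ - 1) + ρ y t * (∑ k, (u₀ k) ^ 2) / 2
              + (∑ k, (B₀ k) ^ 2) / 2) + p₀)
            - ∑ k, u₀ k * maxwellT B₀ k j) j x)
        = ε * slap (fun y => p₀ / (γ - 1) + ρ y t * (∑ k, (u₀ k) ^ 2) / 2
            + (∑ k, (B₀ k) ^ 2) / 2) x)
    -- induction equation
    ∧ (∀ (x : Fin d → ℝ) (t : ℝ), 0 < t → ∀ i,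
      deriv (fun _ => B₀ i) t
        + (∑ j, spd (fun _ => u₀ j * B₀ i - B₀ j * u₀ i) j x)
        = ε * slap (fun _ => B₀ i) x) := by
  constructor
  · -- momentum
    intro x t ht i
    have hm := hmass x t ht
    have hdiff : Differentiable ℝ (fun y => ρ y t) :=
      (hρx t).differentiable (by norm_num)
    -- time derivative
    have hderiv : deriv (fun τ => ρ x τ * u₀ i) t = deriv (fun τ => ρ x τ) t * u₀ i :=
      deriv_mul_const (((hρt x).differentiable one_ne_zero) t) (u₀ i)
    -- flux terms
    have hflux : ∀ j, spd (fun y => (ρ y t * u₀ i) * u₀ j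
        + (if i = j then p₀ else 0) - maxwellT B₀ i j) j x
        = (u₀ i * u₀ j) * spd (fun y => ρ y t) j x := by
      intro j
      have h1 : (fun y => (ρ y t * u₀ i) * u₀ j
          + (if i = j then p₀ else 0) - maxwellT B₀ i j)
          = fun y => (u₀ i * u₀ j) * ρ y t
            + ((if i = j then p₀ else 0) - maxwellT B₀ i j) := by
        funext y; ring
      rw [h1, spd_affine hdiff]
    -- rhs
    have hrhs : slap (fun y => ρ y t * u₀ i) x = u₀ i * slap (fun y => ρ y t) x := by
      have h1 : (fun y => ρ y t * u₀ i) = fun y => u₀ i * ρ y t + 0 := by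
        funext y; ring
      rw [h1, slap_affine (hρx t)]
    -- mass flux
    have hmf : ∀ j, spd (fun y => ρ y t * u₀ j) j x
        = u₀ j * spd (fun y => ρ y t) j x := by
      intro j
      have h1 : (fun y => ρ y t * u₀ j) = fun y => u₀ j * ρ y t + 0 := by
        funext y; ring
      rw [h1, spd_affine hdiff]
    rw [Finset.sum_congr rfl fun j _ => hmf j] at hm
    rw [hderiv, hrhs, Finset.sum_congr rfl fun j _ => hflux j]
    have h2 : ∑ j, (u₀ i * u₀ j) * spd (fun y => ρ y t) j x
        = u₀ i * ∑ j, u₀ j * spd (fun y => ρ y t) j x := by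
      rw [Finset.mul_sum]; exact Finset.sum_congr rfl fun j _ => by ring
    rw [h2]
    linear_combination u₀ i * hm
  constructor
  · -- energy
    intro x t ht
    have hm := hmass x t ht
    have hdiff : Differentiable ℝ (fun y => ρ y t) :=
      (hρx t).differentiable (by norm_num)
    set K : ℝ := ∑ k, (u₀ k) ^ 2 with hK
    set C : ℝ := p₀ / (γ - 1) + (∑ k, (B₀ k) ^ 2) / 2 with hC
    have hderiv : deriv (fun τ => p₀ / (γ - 1) + ρ x τ * K / 2
        + (∑ k, (B₀ k) ^ 2) / 2) t = deriv (fun τ => ρ x τ) t * (K / 2) := by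
      have h1 : (fun τ => p₀ / (γ - 1) + ρ x τ * K / 2 + (∑ k, (B₀ k) ^ 2) / 2)
          = fun τ => (fun σ => ρ x σ) τ * (K / 2) + C := by
        funext τ; simp only [hC]; ring
      rw [h1, deriv_add_const, deriv_mul_const (((hρt x).differentiable one_ne_zero) t)]
    have hflux : ∀ j, spd (fun y => u₀ j * ((p₀ / (γ - 1) + ρ y t * K / 2
          + (∑ k, (B₀ k) ^ 2) / 2) + p₀) - ∑ k, u₀ k * maxwellT B₀ k j) j x
        = (u₀ j * (K / 2)) * spd (fun y => ρ y t) j x := by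
      intro j
      have h1 : (fun y => u₀ j * ((p₀ / (γ - 1) + ρ y t * K / 2
          + (∑ k, (B₀ k) ^ 2) / 2) + p₀) - ∑ k, u₀ k * maxwellT B₀ k j)
          = fun y => (u₀ j * (K / 2)) * ρ y t
            + (u₀ j * (C + p₀) - ∑ k, u₀ k * maxwellT B₀ k j) := by
        funext y; simp only [hC]; ring
      rw [h1, spd_affine hdiff]
    have hrhs : slap (fun y => p₀ / (γ - 1) + ρ y t * K / 2
        + (∑ k, (B₀ k) ^ 2) / 2) x = (K / 2) * slap (fun y => ρ y t) x := by
      have h1 : (fun y => p₀ / (γ - 1) + ρ y t * K / 2 + (∑ k, (B₀ k) ^ 2) / 2)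
          = fun y => (K / 2) * ρ y t + C := by
        funext y; simp only [hC]; ring
      rw [h1, slap_affine (hρx t)]
    have hmf : ∀ j, spd (fun y => ρ y t * u₀ j) j x
        = u₀ j * spd (fun y => ρ y t) j x := by
      intro j
      have h1 : (fun y => ρ y t * u₀ j) = fun y => u₀ j * ρ y t + 0 := by
        funext y; ring
      rw [h1, spd_affine hdiff]
    rw [Finset.sum_congr rfl fun j _ => hmf j] at hm
    rw [hderiv, hrhs, Finset.sum_congr rfl fun j _ => hflux j]
    have h2 : ∑ j, (u₀ j * (K / 2)) * spd (fun y => ρ y t) j x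
        = (K / 2) * ∑ j, u₀ j * spd (fun y => ρ y t) j x := by
      rw [Finset.mul_sum]; exact Finset.sum_congr rfl fun j _ => by ring
    rw [h2]
    linear_combination (K / 2) * hm
  · -- induction
    intro x t ht i
    have h1 : ∀ j : Fin d, spd (fun _ : Fin d → ℝ => u₀ j * B₀ i - B₀ j * u₀ i) j x = 0 :=
      fun j => spd_const _ j x
    have h2 : slap (fun _ : Fin d → ℝ => B₀ i) x = 0 := by
      unfold slap
      refine Finset.sum_eq_zero fun j _ => ?_
      have : spd (fun _ : Fin d → ℝ => B₀ i) j = fun _ => 0 := by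
        funext z; exact spd_const _ j z
      rw [this, spd_const]
    simp [h1, h2]
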